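/- Let k ≥ 1, 0 < δ < 1, X > 0, I a closed interval, and f ∈ C^k(I). If |f^{(i)}(x)/i!| ≤ X·δ^i for all 0 ≤ i < k and every x ∈ I, while |f^{(k)}(x)/k!| ≥ X·δ^k for every x ∈ I, then the length of I satisfies |I| ≤ 2/δ. -/

import Mathlib

open Set Finset

/-- If the lower derivatives of `f` are small but the `k`-th derivative is large
throughout `I`, then `I` is short. -/
theorem stmt_3 (k : ℕ) (hk : 1 ≤ k) (δ X : ℝ) (hδ0 : 0 < δ) (hδ1 : δ < 1) (hX : 0 < X)
    (a b : ℝ) (hab : a < b)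
    (f : ℝ → ℝ) (hf : ContDiffOn ℝ (k : ℕ) f (Icc a b))
    (hlow : ∀ i < k, ∀ x ∈ Icc a b,
      |iteratedDerivWithin i f (Icc a b) x / (Nat.factorial i : ℝ)| ≤ X * δ ^ i)
    (hhigh : ∀ x ∈ Icc a b,
      X * δ ^ k ≤ |iteratedDerivWithin k f (Icc a b) x / (Nat.factorial k : ℝ)|) :
    b - a ≤ 2 / δ := by
  set s := Icc a b with hs
  have hud : UniqueDiffOn ℝ s := uniqueDiffOn_Icc hab
  set g := iteratedDerivWithin (k - 1) f s with hg
  have hgc : ContinuousOn g s :=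
    hf.continuousOn_iteratedDerivWithin (by exact_mod_cast Nat.sub_le k 1) hud
  have hgd : DifferentiableOn ℝ g s :=
    hf.differentiableOn_iteratedDerivWithin (by exact_mod_cast Nat.sub_lt (by omega) one_pos) hud
  have hderiv : ∀ x ∈ Ioo a b, HasDerivAt g (iteratedDerivWithin k f s x) x := by
    intro x hx
    have hxs : x ∈ s := Ioo_subset_Icc_self hx
    have h2 : derivWithin g s x = iteratedDerivWithin k f s x := by
      rw [hg, ← iteratedDerivWithin_succ]
      congr 1
      omega
    have h1 : HasDerivWithinAt g (iteratedDerivWithin k f s x) s x := by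
      rw [← h2]; exact (hgd x hxs).hasDerivWithinAt
    exact h1.hasDerivAt (Icc_mem_nhds hx.1 hx.2)
  obtain ⟨c, hc, hceq⟩ := exists_hasDerivAt_eq_slope g _ hab hgc hderiv
  have hcs : c ∈ s := Ioo_subset_Icc_self hc
  have hfk : (0:ℝ) < (Nat.factorial k : ℝ) := by positivity
  have hfk1 : (0:ℝ) < (Nat.factorial (k-1) : ℝ) := by positivity
  have hba : (0:ℝ) < b - a := by linarith
  -- lower bound on |g b - g a|
  have h1 : X * δ ^ k * (Nat.factorial k : ℝ) ≤ |g b - g a| / (b - a) := by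
    have := hhigh c hcs
    rw [abs_div, abs_of_pos hfk, le_div_iff₀ hfk] at this
    calc X * δ ^ k * (Nat.factorial k : ℝ) ≤ |iteratedDerivWithin k f s c| := this
      _ = |g b - g a| / (b - a) := by rw [hceq, abs_div, abs_of_pos hba]
  have hb' : |g b| ≤ X * δ ^ (k-1) * (Nat.factorial (k-1) : ℝ) := by
    have := hlow (k-1) (by omega) b (right_mem_Icc.mpr hab.le)
    rw [abs_div, abs_of_pos hfk1, div_le_iff₀ hfk1] at this
    linarith
  have ha' : |g a| ≤ X * δ ^ (k-1) * (Nat.factorial (k-1) : ℝ) := by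
    have := hlow (k-1) (by omega) a (left_mem_Icc.mpr hab.le)
    rw [abs_div, abs_of_pos hfk1, div_le_iff₀ hfk1] at this
    linarith
  have h2 : |g b - g a| ≤ 2 * (X * δ ^ (k-1) * (Nat.factorial (k-1) : ℝ)) :=
    (abs_sub _ _).trans (by linarith)
  have h3 : X * δ ^ k * (Nat.factorial k : ℝ) * (b - a)
      ≤ 2 * (X * δ ^ (k-1) * (Nat.factorial (k-1) : ℝ)) := by
    calc X * δ ^ k * (Nat.factorial k : ℝ) * (b - a) ≤ |g b - g a| / (b-a) * (b-a) := by
          exact mul_le_mul_of_nonneg_right h1 hba.le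
      _ = |g b - g a| := div_mul_cancel₀ _ hba.ne'
      _ ≤ _ := h2
  -- rewrite k! = k * (k-1)!, δ^k = δ * δ^(k-1)
  have hfac : (Nat.factorial k : ℝ) = k * (Nat.factorial (k-1) : ℝ) := by
    exact_mod_cast (Nat.mul_factorial_pred (by omega)).symm
  have hpow : δ ^ k = δ * δ ^ (k-1) := by
    conv_lhs => rw [← Nat.sub_add_cancel hk]
    rw [pow_succ]; ring
  rw [hfac, hpow] at h3
  have hk1 : (1:ℝ) ≤ (k:ℝ) := by exact_mod_cast hk
  have hδk : δ * (k:ℝ) * (b - a) ≤ 2 := by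
    have hpos : (0:ℝ) < X * δ ^ (k-1) * (Nat.factorial (k-1) : ℝ) := by positivity
    nlinarith [hpos]
  rw [le_div_iff₀ hδ0]
  nlinarith
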